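/- Under the two-modality linear-Gaussian setup, for every β ∈ [0,1], the matrix K_β − K_c is negative semidefinite, i.e., zᵀ(K_β − K_c)z ≤ 0 for all z ∈ ℝ^d. -/

import Mathlib

open Matrix MeasureTheory

private lemma psd_smul_aux {n m : ℕ} {c : ℝ} (hc : 0 ≤ c) (W : Matrix (Fin m) (Fin n) ℝ) :
    (c • (Wᵀ * W)).PosSemidef := by
  have h := Matrix.posSemidef_conjTranspose_mul_self (R := ℝ) W
  rw [Matrix.conjTranspose_eq_transpose_of_trivial] at h
  refine Matrix.PosSemidef.of_dotProduct_mulVec_nonneg ?_ ?_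
  · have h1 := h.1
    simpa [Matrix.IsHermitian] using h1.smul (by simp : star c = c)
  · intro x
    have := h.dotProduct_mulVec_nonneg x
    simp only [Matrix.smul_mulVec, dotProduct_smul, smul_eq_mul]
    exact mul_nonneg hc this

/-- key: quadratic form of inverse is antitone -/
private lemma inv_quad_mono {n : ℕ} (M N : Matrix (Fin n) (Fin n) ℝ)
    (hM : M.PosDef) (hN : N.PosDef)
    (hle : ∀ w, w ⬝ᵥ (M *ᵥ w) ≤ w ⬝ᵥ (N *ᵥ w)) (z : Fin n → ℝ) :
    z ⬝ᵥ (N⁻¹ *ᵥ z) ≤ z ⬝ᵥ (M⁻¹ *ᵥ z) := by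
  have hMd : IsUnit M.det := hM.det_pos.ne'.isUnit
  have hNd : IsUnit N.det := hN.det_pos.ne'.isUnit
  set u := N⁻¹ *ᵥ z with hu
  set v := M⁻¹ *ᵥ z with hv
  have hNu : N *ᵥ u = z := by
    rw [hu, Matrix.mulVec_mulVec, Matrix.mul_nonsing_inv _ hNd, Matrix.one_mulVec]
  have hMv : M *ᵥ v = z := by
    rw [hv, Matrix.mulVec_mulVec, Matrix.mul_nonsing_inv _ hMd, Matrix.one_mulVec]
  have hMsymm : Mᵀ = M := hM.isHermitian
  have key : 0 ≤ (u - v) ⬝ᵥ (M *ᵥ (u - v)) := by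
    simpa using hM.posSemidef.dotProduct_mulVec_nonneg (u - v)
  have expand : (u - v) ⬝ᵥ (M *ᵥ (u - v)) =
      u ⬝ᵥ (M *ᵥ u) - u ⬝ᵥ (M *ᵥ v) - v ⬝ᵥ (M *ᵥ u) + v ⬝ᵥ (M *ᵥ v) := by
    simp only [Matrix.mulVec_sub, sub_dotProduct, dotProduct_sub]
    ring
  have hvMu : v ⬝ᵥ (M *ᵥ u) = z ⬝ᵥ u := by
    rw [Matrix.dotProduct_mulVec, ← Matrix.mulVec_transpose, hMsymm, hMv]
  have huMv : u ⬝ᵥ (M *ᵥ v) = u ⬝ᵥ z := by rw [hMv]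
  have hvMv : v ⬝ᵥ (M *ᵥ v) = v ⬝ᵥ z := by rw [hMv]
  have h1 : u ⬝ᵥ (M *ᵥ u) ≤ u ⬝ᵥ z := by
    calc u ⬝ᵥ (M *ᵥ u) ≤ u ⬝ᵥ (N *ᵥ u) := hle u
    _ = u ⬝ᵥ z := by rw [hNu]
  rw [expand, hvMu, huMv, hvMv] at key
  have hcomm1 : u ⬝ᵥ z = z ⬝ᵥ u := dotProduct_comm _ _
  have hcomm2 : v ⬝ᵥ z = z ⬝ᵥ v := dotProduct_comm _ _
  linarith

private lemma inv_mul_self_sub {n : ℕ} (B : Matrix (Fin n) (Fin n) ℝ)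
    (h : IsUnit (B + 1).det) : (B + 1)⁻¹ * B = 1 - (B + 1)⁻¹ := by
  have h2 := Matrix.nonsing_inv_mul (B + 1) h
  rw [Matrix.mul_add, Matrix.mul_one] at h2
  exact eq_sub_of_add_eq h2

theorem stmt_6    (d p q : ℕ) (hd : 0 < d) (hp : 0 < p) (hq : 0 < q)
    (Wx : Matrix (Fin p) (Fin d) ℝ) (Wy : Matrix (Fin q) (Fin d) ℝ)
    (σx σy : ℝ) (hσx : 0 < σx) (hσy : 0 < σy)
    (β : ℝ) (hβ : β ∈ Set.Icc (0 : ℝ) 1) :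
    let Ψx : Matrix (Fin p) (Fin p) ℝ := σx ^ 2 • (1 : Matrix (Fin p) (Fin p) ℝ)
    let Ψy : Matrix (Fin q) (Fin q) ℝ := σy ^ 2 • (1 : Matrix (Fin q) (Fin q) ℝ)
    let W : Matrix (Fin p ⊕ Fin q) (Fin d) ℝ := Matrix.fromRows Wx Wy
    let Ψ : Matrix (Fin p ⊕ Fin q) (Fin p ⊕ Fin q) ℝ := Matrix.fromBlocks Ψx 0 0 Ψy
    let Gx : Matrix (Fin d) (Fin p) ℝ := (Wxᵀ * Ψx⁻¹ * Wx + 1)⁻¹ * Wxᵀ * Ψx⁻¹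
    let Gy : Matrix (Fin d) (Fin q) ℝ := (Wyᵀ * Ψy⁻¹ * Wy + 1)⁻¹ * Wyᵀ * Ψy⁻¹
    let Gβ : Matrix (Fin d) (Fin p ⊕ Fin q) ℝ := Matrix.fromCols (β • Gx) ((1 - β) • Gy)
    let Gc : Matrix (Fin d) (Fin p ⊕ Fin q) ℝ := (Wᵀ * Ψ⁻¹ * W + 1)⁻¹ * Wᵀ * Ψ⁻¹
    let Kβ : Matrix (Fin d) (Fin d) ℝ := Gβ * W - 1
    let Kc : Matrix (Fin d) (Fin d) ℝ := Gc * W - 1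
    ∀ z : Fin d → ℝ, z ⬝ᵥ ((Kβ - Kc) *ᵥ z) ≤ 0 := by
  intro Ψx Ψy W Ψ Gx Gy Gβ Gc Kβ Kc z
  obtain ⟨hβ0, hβ1⟩ := hβ
  have hσx2 : (σx : ℝ) ^ 2 ≠ 0 := by positivity
  have hσy2 : (σy : ℝ) ^ 2 ≠ 0 := by positivity
  set cx : ℝ := (σx ^ 2)⁻¹ with hcx
  set cy : ℝ := (σy ^ 2)⁻¹ with hcy
  have hcx0 : 0 ≤ cx := by positivity
  have hcy0 : 0 ≤ cy := by positivity
  set Ax : Matrix (Fin d) (Fin d) ℝ := cx • (Wxᵀ * Wx) with hAx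
  set Ay : Matrix (Fin d) (Fin d) ℝ := cy • (Wyᵀ * Wy) with hAy
  -- inverses of Ψ's
  have hΨxinv : Ψx⁻¹ = cx • (1 : Matrix (Fin p) (Fin p) ℝ) := by
    apply Matrix.inv_eq_right_inv
    simp [Ψx, Matrix.smul_mul, Matrix.mul_smul, smul_smul, hcx,
      mul_inv_cancel₀ hσx2, inv_mul_cancel₀ hσx2]
  have hΨyinv : Ψy⁻¹ = cy • (1 : Matrix (Fin q) (Fin q) ℝ) := by
    apply Matrix.inv_eq_right_inv
    simp [Ψy, Matrix.smul_mul, Matrix.mul_smul, smul_smul, hcy,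
      mul_inv_cancel₀ hσy2, inv_mul_cancel₀ hσy2]
  have hΨinv : Ψ⁻¹ = Matrix.fromBlocks (cx • 1) 0 0 (cy • 1) := by
    apply Matrix.inv_eq_right_inv
    simp [Ψ, Ψx, Ψy, Matrix.fromBlocks_multiply, Matrix.smul_mul, Matrix.mul_smul,
      smul_smul, hcx, hcy, mul_inv_cancel₀ hσx2, mul_inv_cancel₀ hσy2, inv_mul_cancel₀ hσx2, inv_mul_cancel₀ hσy2,
      ← Matrix.fromBlocks_one]
  -- simplify the conjugated matrices
  have hWxA : Wxᵀ * Ψx⁻¹ * Wx = Ax := by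
    rw [hΨxinv, hAx]
    simp [Matrix.mul_smul, Matrix.smul_mul]
  have hWyA : Wyᵀ * Ψy⁻¹ * Wy = Ay := by
    rw [hΨyinv, hAy]
    simp [Matrix.mul_smul, Matrix.smul_mul]
  have hWA : Wᵀ * Ψ⁻¹ * W = Ax + Ay := by
    rw [hΨinv]
    show (Matrix.fromRows Wx Wy)ᵀ * _ * Matrix.fromRows Wx Wy = _
    rw [Matrix.transpose_fromRows, Matrix.fromCols_mul_fromBlocks,
      Matrix.fromCols_mul_fromRows]
    simp [hAx, hAy, Matrix.mul_smul, Matrix.smul_mul]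
  -- positive definiteness
  have hAxpsd : Ax.PosSemidef := psd_smul_aux hcx0 Wx
  have hAypsd : Ay.PosSemidef := psd_smul_aux hcy0 Wy
  have hone : (1 : Matrix (Fin d) (Fin d) ℝ).PosDef := Matrix.PosDef.one
  have hMx : (Ax + 1).PosDef := Matrix.PosDef.posSemidef_add hAxpsd hone
  have hMy : (Ay + 1).PosDef := Matrix.PosDef.posSemidef_add hAypsd hone
  have hMc : (Ax + Ay + 1).PosDef := Matrix.PosDef.posSemidef_add (hAxpsd.add hAypsd) hone
  -- key matrix identities
  have hKx : (Ax + 1)⁻¹ * Ax = 1 - (Ax + 1)⁻¹ :=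
    inv_mul_self_sub Ax hMx.det_pos.ne'.isUnit
  have hKy : (Ay + 1)⁻¹ * Ay = 1 - (Ay + 1)⁻¹ :=
    inv_mul_self_sub Ay hMy.det_pos.ne'.isUnit
  have hKc' : (Ax + Ay + 1)⁻¹ * (Ax + Ay) = 1 - (Ax + Ay + 1)⁻¹ :=
    inv_mul_self_sub (Ax + Ay) hMc.det_pos.ne'.isUnit
  -- compute Gβ * W
  have hGxWx : Gx * Wx = (Ax + 1)⁻¹ * Ax := by
    show (Wxᵀ * Ψx⁻¹ * Wx + 1)⁻¹ * Wxᵀ * Ψx⁻¹ * Wx = _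
    rw [Matrix.mul_assoc, Matrix.mul_assoc, ← Matrix.mul_assoc Wxᵀ, hWxA]
  have hGyWy : Gy * Wy = (Ay + 1)⁻¹ * Ay := by
    show (Wyᵀ * Ψy⁻¹ * Wy + 1)⁻¹ * Wyᵀ * Ψy⁻¹ * Wy = _
    rw [Matrix.mul_assoc, Matrix.mul_assoc, ← Matrix.mul_assoc Wyᵀ, hWyA]
  have hGβW : Gβ * W = β • ((Ax + 1)⁻¹ * Ax) + (1 - β) • ((Ay + 1)⁻¹ * Ay) := by
    show Matrix.fromCols (β • Gx) ((1 - β) • Gy) * Matrix.fromRows Wx Wy = _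
    rw [Matrix.fromCols_mul_fromRows, Matrix.smul_mul, Matrix.smul_mul, hGxWx, hGyWy]
  have hGcW : Gc * W = (Ax + Ay + 1)⁻¹ * (Ax + Ay) := by
    show (Wᵀ * Ψ⁻¹ * W + 1)⁻¹ * Wᵀ * Ψ⁻¹ * W = _
    rw [Matrix.mul_assoc, Matrix.mul_assoc, ← Matrix.mul_assoc Wᵀ, hWA]
  -- final matrix form
  have hdiff : Kβ - Kc = (Ax + Ay + 1)⁻¹ - β • (Ax + 1)⁻¹ - (1 - β) • (Ay + 1)⁻¹ := by
    show Gβ * W - 1 - (Gc * W - 1) = _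
    rw [hGβW, hGcW, hKx, hKy, hKc']
    module
  -- the inequalities
  have e1 : z ⬝ᵥ ((Ax + Ay + 1)⁻¹ *ᵥ z) ≤ z ⬝ᵥ ((Ax + 1)⁻¹ *ᵥ z) := by
    apply inv_quad_mono _ _ hMx hMc
    intro w
    have h := hAypsd.dotProduct_mulVec_nonneg w
    simp only [star_trivial] at h
    simp only [Matrix.add_mulVec, dotProduct_add]
    linarith
  have e2 : z ⬝ᵥ ((Ax + Ay + 1)⁻¹ *ᵥ z) ≤ z ⬝ᵥ ((Ay + 1)⁻¹ *ᵥ z) := by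
    apply inv_quad_mono _ _ hMy hMc
    intro w
    have h := hAxpsd.dotProduct_mulVec_nonneg w
    simp only [star_trivial] at h
    simp only [Matrix.add_mulVec, dotProduct_add]
    linarith
  rw [hdiff]
  simp only [Matrix.sub_mulVec, Matrix.smul_mulVec, dotProduct_sub,
    dotProduct_smul, smul_eq_mul]
  have m1 : β * (z ⬝ᵥ ((Ax + Ay + 1)⁻¹ *ᵥ z)) ≤ β * (z ⬝ᵥ ((Ax + 1)⁻¹ *ᵥ z)) :=
    mul_le_mul_of_nonneg_left e1 hβ0
  have m2 : (1 - β) * (z ⬝ᵥ ((Ax + Ay + 1)⁻¹ *ᵥ z)) ≤ (1 - β) * (z ⬝ᵥ ((Ay + 1)⁻¹ *ᵥ z)) :=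
    mul_le_mul_of_nonneg_left e2 (by linarith)
  linarith
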